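/- Define the simplicial complex Δ[n] on vertex set {1,...,n} whose faces are the subsets in which any two distinct elements differ by at least 2. Then Δ[3k+3] is homotopy equivalent to the sphere S^k for every natural number k. -/

import Mathlib

/-- `s` is a face of the simplicial complex `Δ[n]`: a subset of `{1,…,n}` in which
any two distinct elements differ by at least 2. -/
def IsDeltaFace (n : ℕ) (s : Set ℕ) : Prop :=
  s ⊆ Set.Icc 1 n ∧ ∀ i ∈ s, ∀ j ∈ s, i ≠ j → i + 2 ≤ j ∨ j + 2 ≤ i

/-- The geometric realization of `Δ[n]`: convex combinations of vertices supported
on a face. -/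
abbrev DeltaRealization (n : ℕ) : Type :=
  {x : ℕ → ℝ // (∀ i, 0 ≤ x i) ∧ IsDeltaFace n (Function.support x) ∧
    ∑ i ∈ Finset.Icc 1 n, x i = 1}

namespace Stmt6

lemma face_mono {n : ℕ} {S T : Set ℕ} (h : IsDeltaFace n S) (hTS : T ⊆ S) :
    IsDeltaFace n T :=
  ⟨hTS.trans h.1, fun i hi j hj hij => h.2 i (hTS hi) j (hTS hj) hij⟩

def P (k j : ℕ) (x : ℕ → ℝ) : Prop :=
  (∀ i, 0 ≤ x i) ∧ IsDeltaFace (3*k+3) (Function.support x) ∧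
    (∑ i ∈ Finset.Icc 1 (3*k+3), x i = 1) ∧ ∀ m, 1 ≤ m → m ≤ j → x (3*m) = 0

abbrev Y (k j : ℕ) : Type := {x : ℕ → ℝ // P k j x}

noncomputable def fold (j : ℕ) (t : ℝ) (x : ℕ → ℝ) : ℕ → ℝ :=
  fun i => if i = 3*j then (1-t) * x i
    else if i = 3*j - 2 then x i + t * x (3*j) else x i

lemma fold_zero (j : ℕ) (x : ℕ → ℝ) : fold j 0 x = x := by
  funext i; unfold fold; split_ifs with h1 h2 <;> ring

lemma fold_fix {j : ℕ} {x : ℕ → ℝ} (h0 : x (3*j) = 0) : fold j 1 x = x := by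
  funext i; unfold fold; split_ifs with h1 h2
  · subst h1; rw [h0]; ring
  · rw [h0]; ring
  · rfl

lemma fold_sum {n j : ℕ} (hj : 1 ≤ j) (hn : 3*j ≤ n) (t : ℝ) (x : ℕ → ℝ) :
    ∑ i ∈ Finset.Icc 1 n, fold j t x i = ∑ i ∈ Finset.Icc 1 n, x i := by
  have ha : (3*j-2) ∈ Finset.Icc 1 n := by simp only [Finset.mem_Icc]; omega
  have hb : (3*j) ∈ (Finset.Icc 1 n).erase (3*j-2) := by
    simp only [Finset.mem_erase, Finset.mem_Icc]; omega
  have key : ∀ f : ℕ → ℝ, ∑ i ∈ Finset.Icc 1 n, f i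
      = (∑ i ∈ ((Finset.Icc 1 n).erase (3*j-2)).erase (3*j), f i) + f (3*j) + f (3*j-2) := by
    intro f
    rw [← Finset.sum_erase_add _ f ha, ← Finset.sum_erase_add _ f hb]
  rw [key (fold j t x), key x]
  have h1 : ∑ i ∈ ((Finset.Icc 1 n).erase (3*j-2)).erase (3*j), fold j t x i
      = ∑ i ∈ ((Finset.Icc 1 n).erase (3*j-2)).erase (3*j), x i := by
    apply Finset.sum_congr rfl
    intro i hi
    simp only [Finset.mem_erase] at hi
    unfold fold; rw [if_neg hi.1, if_neg hi.2.1]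
  rw [h1]
  unfold fold
  rw [if_pos rfl, if_neg (by omega), if_pos rfl]
  ring

lemma fold_memP {k j : ℕ} (hj : 1 ≤ j) (hjk : j ≤ k+1) {x : ℕ → ℝ} (hx : P k (j-1) x)
    {t : ℝ} (ht0 : 0 ≤ t) (ht1 : t ≤ 1) : P k (j-1) (fold j t x) := by
  obtain ⟨hpos, hface, hsum, hz⟩ := hx
  refine ⟨?_, ?_, ?_, ?_⟩
  · intro i; unfold fold; split_ifs with h1 h2
    · exact mul_nonneg (by linarith) (hpos i)
    · exact add_nonneg (hpos i) (mul_nonneg ht0 (hpos _))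
    · exact hpos i
  · by_cases h0 : x (3*j) = 0
    · refine face_mono hface ?_
      intro i hi
      simp only [Function.mem_support] at hi ⊢
      unfold fold at hi
      split_ifs at hi with h1 h2
      · intro hc; apply hi; rw [hc]; ring
      · intro hc; apply hi; rw [hc, h0]; ring
      · exact hi
    · have h3j : (3*j) ∈ Function.support x := h0
      have hsub : Function.support (fold j t x) ⊆ Function.support x ∪ {3*j-2} := by
        intro i hi
        simp only [Function.mem_support] at hi
        unfold fold at hi
        split_ifs at hi with h1 h2
        · left; intro hc; apply hi; rw [hc]; ring
        · right; exact h2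
        · left; exact hi
      refine face_mono ?_ hsub
      have key : ∀ s ∈ Function.support x, s ≠ 3*j-2 →
          (s + 2 ≤ 3*j-2 ∨ (3*j-2) + 2 ≤ s) := by
        intro s hs hne
        by_cases hs3 : s = 3*j
        · right; omega
        · have hd := hface.2 s hs (3*j) h3j hs3
          have hs1 : 1 ≤ s := (hface.1 hs).1
          rcases hd with h | h
          · left
            by_cases hsj : s = 3*(j-1)
            · exfalso
              have hj2 : 2 ≤ j := by omega
              have hzz := hz (j-1) (by omega) (by omega)
              exact hs (by rw [hsj]; exact hzz)
            · omega
          · right; omega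
      constructor
      · intro s hs
        rcases hs with hs | hs
        · exact hface.1 hs
        · simp only [Set.mem_singleton_iff] at hs
          subst hs; simp only [Set.mem_Icc]; omega
      · intro a ha b hb hab
        rcases ha with ha | ha <;> rcases hb with hb | hb
        · exact hface.2 a ha b hb hab
        · simp only [Set.mem_singleton_iff] at hb; subst hb
          rcases key a ha hab with h | h
          · left; exact h
          · right; omega
        · simp only [Set.mem_singleton_iff] at ha; subst ha
          rcases key b hb (Ne.symm hab) with h | h
          · right; exact h
          · left; omega
        · simp only [Set.mem_singleton_iff] at ha hb; exact absurd (ha.trans hb.symm) hab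
  · rw [fold_sum hj (by omega) t x]; exact hsum
  · intro m hm1 hm2
    unfold fold
    rw [if_neg (by omega), if_neg (by omega)]
    exact hz m hm1 hm2

lemma fold_one_memP {k j : ℕ} (hj : 1 ≤ j) (hjk : j ≤ k+1) {x : ℕ → ℝ} (hx : P k (j-1) x) :
    P k j (fold j 1 x) := by
  obtain ⟨h1, h2, h3, _⟩ := fold_memP hj hjk hx zero_le_one le_rfl
  refine ⟨h1, h2, h3, ?_⟩
  intro m hm1 hm2
  unfold fold
  by_cases hmj : m = j
  · subst hmj; rw [if_pos rfl]; ring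
  · rw [if_neg (by omega), if_neg (by omega)]
    exact hx.2.2.2 m hm1 (by omega)

lemma cont_fold (j : ℕ) : Continuous (fun p : ℝ × (ℕ → ℝ) => fold j p.1 p.2) := by
  apply continuous_pi; intro i
  unfold fold
  split_ifs with h1 h2
  · exact (continuous_const.sub continuous_fst).mul ((continuous_apply i).comp continuous_snd)
  · exact ((continuous_apply i).comp continuous_snd).add
      (continuous_fst.mul ((continuous_apply (3*j)).comp continuous_snd))
  · exact (continuous_apply i).comp continuous_snd

lemma P_mono {k j j' : ℕ} (h : j' ≤ j) {x : ℕ → ℝ} (hx : P k j x) : P k j' x :=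
  ⟨hx.1, hx.2.1, hx.2.2.1, fun m hm1 hm2 => hx.2.2.2 m hm1 (hm2.trans h)⟩

noncomputable def stepEquiv (k j : ℕ) (hj : 1 ≤ j) (hjk : j ≤ k+1) :
    ContinuousMap.HomotopyEquiv (Y k (j-1)) (Y k j) where
  toFun := ⟨fun x => ⟨fold j 1 x.1, fold_one_memP hj hjk x.2⟩, by
    apply Continuous.subtype_mk
    exact (cont_fold j).comp (continuous_const.prodMk continuous_subtype_val)⟩
  invFun := ⟨fun x => ⟨x.1, P_mono (Nat.sub_le j 1) x.2⟩,
    Continuous.subtype_mk continuous_subtype_val _⟩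
  left_inv := by
    refine ⟨⟨⟨fun p => ⟨fold j (1 - p.1) p.2.1,
      fold_memP hj hjk p.2.2 (by have := p.1.2.2; simp; linarith)
        (by have := p.1.2.1; simp; linarith)⟩, ?_⟩, ?_, ?_⟩⟩
    · apply Continuous.subtype_mk
      exact (cont_fold j).comp ((continuous_const.sub
        (continuous_subtype_val.comp continuous_fst)).prodMk
        (continuous_subtype_val.comp continuous_snd))
    · intro x
      apply Subtype.ext
      show fold j (1 - (0:ℝ)) x.1 = _
      norm_num
    · intro x
      apply Subtype.ext
      show fold j (1 - (1:ℝ)) x.1 = x.1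
      norm_num [fold_zero]
  right_inv := by
    have hfix : ∀ x : Y k j, fold j 1 x.1 = x.1 := fun x =>
      fold_fix (x.2.2.2.2 j hj le_rfl)
    refine ⟨⟨⟨fun p => p.2, continuous_snd⟩, ?_, ?_⟩⟩
    · intro x; apply Subtype.ext; exact (hfix x).symm
    · intro x; rfl

lemma chain (k : ℕ) : ∀ j, j ≤ k+1 → Nonempty (ContinuousMap.HomotopyEquiv (Y k 0) (Y k j))
  | 0, _ => ⟨ContinuousMap.HomotopyEquiv.refl _⟩
  | (j+1), h => by
      obtain ⟨e⟩ := chain k j (by omega)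
      exact ⟨e.trans (stepEquiv k (j+1) (by omega) h)⟩

noncomputable def startHomeo (k : ℕ) : DeltaRealization (3*k+3) ≃ₜ Y k 0 :=
  Homeomorph.mk
    ⟨fun x => ⟨x.1, x.2.1, x.2.2.1, x.2.2.2,
        fun m hm1 hm0 => absurd (hm1.trans hm0) (by norm_num)⟩,
      fun x => ⟨x.1, x.2.1, x.2.2.1, x.2.2.2.1⟩,
      fun x => rfl, fun x => rfl⟩
    (Continuous.subtype_mk continuous_subtype_val _)
    (Continuous.subtype_mk continuous_subtype_val _)


lemma sum_blocks (x : ℕ → ℝ) : ∀ K : ℕ, ∑ m ∈ Finset.Icc 1 (3*K), x m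
    = ∑ i ∈ Finset.range K, (x (3*i+1) + x (3*i+2) + x (3*i+3)) := by
  intro K
  induction K with
  | zero => simp
  | succ K ih =>
    have h : 3*(K+1) = (3*K+1+1)+1 := by ring
    rw [h, Finset.sum_Icc_succ_top (by omega), Finset.sum_Icc_succ_top (by omega),
      Finset.sum_Icc_succ_top (by omega), ih, Finset.sum_range_succ]
    have e3 : 3*K+1+1+1 = 3*K+3 := by omega
    have e2 : 3*K+1+1 = 3*K+2 := by omega
    rw [e3, e2]
    ring

lemma pair_zero {k j : ℕ} {x : ℕ → ℝ} (hx : P k j x) (i : ℕ) :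
    x (3*i+1) = 0 ∨ x (3*i+2) = 0 := by
  by_contra h
  push_neg at h
  have := hx.2.1.2 (3*i+1) h.1 (3*i+2) h.2 (by omega)
  omega

/-- for x in the octahedral subcomplex, the ℓ¹ mass of pairs is 1 -/
lemma pairs_sum {k : ℕ} {x : ℕ → ℝ} (hx : P k (k+1) x) :
    ∑ i ∈ Finset.range (k+1), (x (3*i+1) + x (3*i+2)) = 1 := by
  have h1 := hx.2.2.1
  have h2 : (3*k+3 : ℕ) = 3*(k+1) := by ring
  rw [h2, sum_blocks] at h1
  rw [← h1]
  apply Finset.sum_congr rfl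
  intro i hi
  simp only [Finset.mem_range] at hi
  have h3 : x (3*i+3) = 0 := by
    have := hx.2.2.2 (i+1) (by omega) (by omega)
    have e : 3*(i+1) = 3*i+3 := by ring
    rwa [e] at this
  rw [h3]; ring

noncomputable def sphToYaux (k : ℕ) (z : ℕ → ℝ) : ℕ → ℝ := fun m =>
  if m % 3 = 1 ∧ m ≤ 3*k+3 then max (-(z (m/3))) 0
  else if m % 3 = 2 ∧ m ≤ 3*k+3 then max (z (m/3)) 0
  else 0

lemma sphToYaux_val1 {k i : ℕ} (hi : i ≤ k) (z : ℕ → ℝ) :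
    sphToYaux k z (3*i+1) = max (-(z i)) 0 := by
  unfold sphToYaux
  rw [if_pos ⟨by omega, by omega⟩]
  have h : (3*i+1)/3 = i := by omega
  rw [h]

lemma sphToYaux_val2 {k i : ℕ} (hi : i ≤ k) (z : ℕ → ℝ) :
    sphToYaux k z (3*i+2) = max (z i) 0 := by
  unfold sphToYaux
  rw [if_neg (by omega), if_pos ⟨by omega, by omega⟩]
  have h : (3*i+2)/3 = i := by omega
  rw [h]

lemma sphToYaux_val0 {k m : ℕ} (hm : m % 3 = 0 ∨ 3*k+3 < m) (z : ℕ → ℝ) :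
    sphToYaux k z m = 0 := by
  unfold sphToYaux
  rw [if_neg (by omega), if_neg (by omega)]

lemma max_sub_max (a : ℝ) : max a 0 - max (-a) 0 = a := by
  rcases le_total a 0 with h | h
  · rw [max_eq_right h, max_eq_left (by linarith)]; ring
  · rw [max_eq_left h, max_eq_right (by linarith)]; ring

lemma max_add_max (a : ℝ) : max a 0 + max (-a) 0 = |a| := by
  rcases le_total a 0 with h | h
  · rw [max_eq_right h, max_eq_left (by linarith), abs_of_nonpos h]; ring
  · rw [max_eq_left h, max_eq_right (by linarith), abs_of_nonneg h]; ring

lemma sphToYaux_memP {k : ℕ} {z : ℕ → ℝ}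
    (hz : ∑ i ∈ Finset.range (k+1), |z i| = 1) : P k (k+1) (sphToYaux k z) := by
  have hsupp : ∀ m, sphToYaux k z m ≠ 0 →
      (m % 3 = 1 ∨ m % 3 = 2) ∧ 1 ≤ m ∧ m ≤ 3*k+3 := by
    intro m hm
    unfold sphToYaux at hm
    split_ifs at hm with h1 h2
    · exact ⟨Or.inl h1.1, by omega, h1.2⟩
    · exact ⟨Or.inr h2.1, by omega, h2.2⟩
    · exact absurd rfl hm
  have hsgn : ∀ m, sphToYaux k z m ≠ 0 →
      (m % 3 = 1 → z (m/3) < 0) ∧ (m % 3 = 2 → 0 < z (m/3)) := by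
    intro m hm
    unfold sphToYaux at hm
    split_ifs at hm with h1 h2
    · constructor
      · intro _
        rcases lt_or_ge (z (m/3)) 0 with h | h
        · exact h
        · exact absurd (max_eq_right (by linarith)) hm
      · intro h; omega
    · constructor
      · intro h; omega
      · intro _
        rcases lt_or_ge 0 (z (m/3)) with h | h
        · exact h
        · exact absurd (max_eq_right (by linarith)) hm
    · exact absurd rfl hm
  refine ⟨?_, ⟨?_, ?_⟩, ?_, ?_⟩
  · intro m; unfold sphToYaux; split_ifs <;> simp [le_max_right]
  · intro m hm
    have := hsupp m hm
    simp only [Set.mem_Icc]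
    omega
  · intro a ha b hb hab
    have hA := hsupp a ha
    have hB := hsupp b hb
    by_cases hq : a / 3 = b / 3
    · exfalso
      have h1 : a % 3 ≠ b % 3 := by omega
      have hga := hsgn a ha
      have hgb := hsgn b hb
      rcases hA.1 with h2 | h2 <;> rcases hB.1 with h3 | h3
      · omega
      · have := hga.1 h2; have := hgb.2 h3; rw [hq] at *; linarith
      · have := hga.2 h2; have := hgb.1 h3; rw [hq] at *; linarith
      · omega
    · omega
  · have h2 : (3*k+3 : ℕ) = 3*(k+1) := by ring
    rw [h2, sum_blocks, ← hz]
    apply Finset.sum_congr rfl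
    intro i hi
    simp only [Finset.mem_range] at hi
    rw [sphToYaux_val1 (by omega), sphToYaux_val2 (by omega),
      sphToYaux_val0 (Or.inl (by omega))]
    rw [← max_add_max (z i)]
    ring
  · intro m hm1 hm2
    exact sphToYaux_val0 (Or.inl (by omega)) z


noncomputable def phi (k : ℕ) (x : ℕ → ℝ) : EuclideanSpace ℝ (Fin (k+1)) :=
  (WithLp.equiv 2 _).symm (fun i : Fin (k+1) => x (3*(i:ℕ)+2) - x (3*(i:ℕ)+1))

lemma phi_apply (k : ℕ) (x : ℕ → ℝ) (i : Fin (k+1)) :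
    phi k x i = x (3*(i:ℕ)+2) - x (3*(i:ℕ)+1) := rfl

noncomputable def l1 (k : ℕ) (u : EuclideanSpace ℝ (Fin (k+1))) : ℝ := ∑ i, |u i|

lemma l1_nonneg (k : ℕ) (u : EuclideanSpace ℝ (Fin (k+1))) : 0 ≤ l1 k u :=
  Finset.sum_nonneg fun i _ => abs_nonneg _

lemma l1_eq_zero {k : ℕ} {u : EuclideanSpace ℝ (Fin (k+1))} (h : l1 k u = 0) : u = 0 := by
  have h0 : ∀ i, u i = 0 := fun i => abs_eq_zero.mp
    (Finset.sum_eq_zero_iff_of_nonneg (fun i _ => abs_nonneg (u i)) |>.mp h i (Finset.mem_univ i))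
  ext i; exact h0 i

lemma l1_smul (k : ℕ) (c : ℝ) (u : EuclideanSpace ℝ (Fin (k+1))) :
    l1 k (c • u) = |c| * l1 k u := by
  unfold l1
  rw [Finset.mul_sum]
  apply Finset.sum_congr rfl
  intro i _
  show |c * u i| = _
  rw [abs_mul]

lemma x_zero {k : ℕ} (x : Y k (k+1)) {m : ℕ} (h : m % 3 = 0 ∨ 3*k+3 < m) : x.1 m = 0 := by
  by_contra hm
  have hIcc := x.2.2.1.1 (hm : m ∈ Function.support x.1)
  simp only [Set.mem_Icc] at hIcc
  rcases h with h | h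
  · have hz := x.2.2.2.2 (m/3) (by omega) (by omega)
    have : 3*(m/3) = m := by omega
    rw [this] at hz
    exact hm hz
  · omega

lemma l1_phi {k : ℕ} (x : Y k (k+1)) : l1 k (phi k x.1) = 1 := by
  unfold l1
  have h1 : ∀ i : Fin (k+1), |phi k x.1 i| = x.1 (3*(i:ℕ)+1) + x.1 (3*(i:ℕ)+2) := by
    intro i
    rw [phi_apply]
    rcases pair_zero x.2 (i:ℕ) with h | h
    · rw [h, abs_of_nonneg (by have := x.2.1 (3*(i:ℕ)+2); linarith)]; ring
    · rw [h, abs_of_nonpos (by have := x.2.1 (3*(i:ℕ)+1); linarith)]; ring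
  rw [Finset.sum_congr rfl fun i _ => h1 i]
  rw [Fin.sum_univ_eq_sum_range (fun n => x.1 (3*n+1) + x.1 (3*n+2))]
  exact pairs_sum x.2

lemma l1_phi_pos {k : ℕ} (x : Y k (k+1)) : phi k x.1 ≠ 0 := by
  intro h
  have := l1_phi x
  rw [h] at this
  unfold l1 at this
  simp at this

lemma norm_phi_pos {k : ℕ} (x : Y k (k+1)) : 0 < ‖phi k x.1‖ :=
  norm_pos_iff.mpr (l1_phi_pos x)

noncomputable def fwd {k : ℕ} (x : Y k (k+1)) :
    Metric.sphere (0 : EuclideanSpace ℝ (Fin (k+1))) 1 :=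
  ⟨‖phi k x.1‖⁻¹ • phi k x.1, by
    rw [mem_sphere_zero_iff_norm, norm_smul, Real.norm_eq_abs,
      abs_of_nonneg (inv_nonneg.mpr (norm_nonneg _)),
      inv_mul_cancel₀ (norm_phi_pos x).ne']⟩

noncomputable def zfun (k : ℕ) (u : EuclideanSpace ℝ (Fin (k+1))) : ℕ → ℝ :=
  fun n => if h : n < k+1 then (l1 k u)⁻¹ * u ⟨n, h⟩ else 0

lemma l1_pos_of_sphere {k : ℕ} (u : Metric.sphere (0 : EuclideanSpace ℝ (Fin (k+1))) 1) :
    0 < l1 k u.1 := by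
  rcases (l1_nonneg k u.1).lt_or_eq with h | h
  · exact h
  · exfalso
    have h0 : u.1 = 0 := l1_eq_zero h.symm
    have := mem_sphere_zero_iff_norm.mp u.2
    rw [h0] at this
    simp at this

lemma zfun_sum {k : ℕ} (u : Metric.sphere (0 : EuclideanSpace ℝ (Fin (k+1))) 1) :
    ∑ i ∈ Finset.range (k+1), |zfun k u.1 i| = 1 := by
  rw [← Fin.sum_univ_eq_sum_range (fun n => |zfun k u.1 n|)]
  have h1 : ∀ i : Fin (k+1), |zfun k u.1 (i:ℕ)| = (l1 k u.1)⁻¹ * |u.1 i| := by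
    intro i
    unfold zfun
    rw [dif_pos i.2, abs_mul, abs_of_nonneg (inv_nonneg.mpr (l1_nonneg k u.1))]
  rw [Finset.sum_congr rfl fun i _ => h1 i, ← Finset.mul_sum]
  exact inv_mul_cancel₀ (l1_pos_of_sphere u).ne'

noncomputable def bwd {k : ℕ} (u : Metric.sphere (0 : EuclideanSpace ℝ (Fin (k+1))) 1) :
    Y k (k+1) :=
  ⟨sphToYaux k (zfun k u.1), sphToYaux_memP (zfun_sum u)⟩

lemma cont_l1 (k : ℕ) : Continuous (l1 k) := by
  unfold l1
  apply continuous_finset_sum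
  intro i _
  exact ((continuous_apply i).comp (PiLp.continuous_ofLp 2 _)).abs

lemma zfun_fwd {k : ℕ} (x : Y k (k+1)) :
    zfun k (fwd x).1 = fun n => if h : n < k+1 then phi k x.1 ⟨n,h⟩ else 0 := by
  funext n
  unfold zfun
  by_cases h : n < k+1
  · rw [dif_pos h, dif_pos h]
    have hc : l1 k (fwd x).1 = ‖phi k x.1‖⁻¹ := by
      show l1 k (‖phi k x.1‖⁻¹ • phi k x.1) = _
      rw [l1_smul, abs_of_nonneg (inv_nonneg.mpr (norm_nonneg _)), l1_phi, mul_one]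
    rw [hc]
    show (‖phi k x.1‖⁻¹)⁻¹ * (‖phi k x.1‖⁻¹ • phi k x.1) ⟨n,h⟩ = _
    have h2 : (‖phi k x.1‖⁻¹ • phi k x.1) (⟨n,h⟩ : Fin (k+1))
        = ‖phi k x.1‖⁻¹ * phi k x.1 ⟨n,h⟩ := rfl
    rw [h2, ← mul_assoc, inv_inv, mul_inv_cancel₀ (norm_phi_pos x).ne', one_mul]
  · rw [dif_neg h, dif_neg h]

lemma bwd_fwd {k : ℕ} (x : Y k (k+1)) : bwd (fwd x) = x := by
  apply Subtype.ext
  show sphToYaux k (zfun k (fwd x).1) = x.1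
  rw [zfun_fwd x]
  set z : ℕ → ℝ := fun n => if h : n < k+1 then phi k x.1 ⟨n,h⟩ else 0 with hzdef
  have hzv : ∀ q : ℕ, q ≤ k → z q = x.1 (3*q+2) - x.1 (3*q+1) := by
    intro q hq
    rw [hzdef]
    simp only []
    rw [dif_pos (by omega : q < k+1)]
    rfl
  funext m
  rcases Nat.lt_or_ge (3*k+3) m with hgt | hle
  · rw [sphToYaux_val0 (Or.inr hgt), x_zero x (Or.inr hgt)]
  · have h3 : m % 3 = 0 ∨ m % 3 = 1 ∨ m % 3 = 2 := by omega
    rcases h3 with h3 | h3 | h3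
    · rw [sphToYaux_val0 (Or.inl h3), x_zero x (Or.inl h3)]
    · have hi : m/3 ≤ k := by omega
      have hm : m = 3*(m/3)+1 := by omega
      rw [hm, sphToYaux_val1 hi, hzv (m/3) hi]
      rcases pair_zero x.2 (m/3) with h | h
      · rw [h, sub_zero]
        rw [max_eq_right (neg_nonpos.mpr (x.2.1 _))]
      · rw [h, zero_sub, neg_neg, max_eq_left (x.2.1 _)]
    · have hi : m/3 ≤ k := by omega
      have hm : m = 3*(m/3)+2 := by omega
      rw [hm, sphToYaux_val2 hi, hzv (m/3) hi]
      rcases pair_zero x.2 (m/3) with h | h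
      · rw [h, sub_zero, max_eq_left (x.2.1 _)]
      · rw [h, zero_sub]
        rw [max_eq_right (neg_nonpos.mpr (x.2.1 _))]

lemma phi_bwd {k : ℕ} (u : Metric.sphere (0 : EuclideanSpace ℝ (Fin (k+1))) 1) :
    phi k (bwd u).1 = (l1 k u.1)⁻¹ • u.1 := by
  ext i
  show phi k (sphToYaux k (zfun k u.1)) i = _
  have hik : (i:ℕ) ≤ k := Nat.lt_succ_iff.mp i.isLt
  rw [phi_apply, sphToYaux_val2 hik, sphToYaux_val1 hik, max_sub_max]
  unfold zfun
  rw [dif_pos i.isLt]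
  rfl

lemma fwd_bwd {k : ℕ} (u : Metric.sphere (0 : EuclideanSpace ℝ (Fin (k+1))) 1) :
    fwd (bwd u) = u := by
  apply Subtype.ext
  show ‖phi k (bwd u).1‖⁻¹ • phi k (bwd u).1 = u.1
  rw [phi_bwd u]
  have hc : 0 < (l1 k u.1)⁻¹ := inv_pos.mpr (l1_pos_of_sphere u)
  have hn : ‖(l1 k u.1)⁻¹ • u.1‖ = (l1 k u.1)⁻¹ := by
    rw [norm_smul, Real.norm_eq_abs, abs_of_nonneg hc.le,
      mem_sphere_zero_iff_norm.mp u.2, mul_one]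
  rw [hn, smul_smul, inv_inv, mul_inv_cancel₀ (l1_pos_of_sphere u).ne', one_smul]

lemma cont_fwd {k : ℕ} : Continuous (@fwd k) := by
  apply Continuous.subtype_mk
  have hphi : Continuous fun x : Y k (k+1) => phi k x.1 := by
    unfold phi
    exact (PiLp.continuous_toLp 2 _).comp (continuous_pi fun i =>
      ((continuous_apply _).comp continuous_subtype_val).sub
        ((continuous_apply _).comp continuous_subtype_val))
  exact ((hphi.norm).inv₀ fun x => (norm_phi_pos x).ne').smul hphi

set_option maxHeartbeats 1000000 in
lemma cont_bwd {k : ℕ} : Continuous (@bwd k) := by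
  apply Continuous.subtype_mk
  have hl1 : Continuous fun u : Metric.sphere (0 : EuclideanSpace ℝ (Fin (k+1))) 1 =>
      (l1 k u.1)⁻¹ :=
    ((cont_l1 k).comp continuous_subtype_val).inv₀ fun u => (l1_pos_of_sphere u).ne'
  have hz : ∀ q : ℕ, Continuous fun u : Metric.sphere (0 : EuclideanSpace ℝ (Fin (k+1))) 1 =>
      zfun k u.1 q := by
    intro q
    unfold zfun
    by_cases hq : q < k+1
    · simp only [dif_pos hq]
      exact hl1.mul ((continuous_apply (⟨q,hq⟩ : Fin (k+1))).comp
        ((PiLp.continuous_ofLp 2 _).comp continuous_subtype_val))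
    · simp only [dif_neg hq]
      exact continuous_const
  apply continuous_pi
  intro m
  unfold sphToYaux
  split_ifs with h1 h2
  · exact ((hz (m/3)).neg).max continuous_const
  · exact (hz (m/3)).max continuous_const
  · exact continuous_const

set_option maxHeartbeats 1000000 in
noncomputable def octaHomeo (k : ℕ) :
    Y k (k+1) ≃ₜ Metric.sphere (0 : EuclideanSpace ℝ (Fin (k+1))) 1 :=
  Homeomorph.mk ⟨fwd, bwd, bwd_fwd, fwd_bwd⟩ cont_fwd cont_bwd


end Stmt6

/-- `Δ[3 * k + 3]` is homotopy equivalent to the sphere `S^k` for every natural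
number `k`. -/
theorem stmt_6 :
    ∀ k : ℕ, Nonempty
      (ContinuousMap.HomotopyEquiv (DeltaRealization (3 * k + 3))
        (Metric.sphere (0 : EuclideanSpace ℝ (Fin (k + 1))) 1)) := by
  intro k
  obtain ⟨e⟩ := Stmt6.chain k (k+1) le_rfl
  exact ⟨((Stmt6.startHomeo k).toHomotopyEquiv.trans e).trans
    (Stmt6.octaHomeo k).toHomotopyEquiv⟩
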